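/- Let k be a field of characteristic 2, r ≥ 1, and consider S = k[x_1,…,x_r,A]/(x_1+⋯+x_r) with the action of E_r = (Z/2)^r where ε_i fixes each x_m and sends A to A − x_i. Then the product ε_1⋯ε_r acts as the identity on S, and the ring of E_r-invariants equals the ring of E_{r−1}-invariants, namely k[x_1,…,x_r, η_{r−1}]/(x_1+⋯+x_r), where η_{r−1} = ∏_{I ⊆ {1,…,r−1}} (A − ∑_{i∈I} x_i). -/

import Mathlib

open MvPolynomial Finset

set_option linter.unusedSectionVars false
namespace Stmt14

open scoped symmDiff

lemma sum_symmDiff_char2 {R ι : Type*} [CommRing R] [CharP R 2] [DecidableEq ι]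
    (f : ι → R) (s t : Finset ι) :
    ∑ i ∈ s ∆ t, f i = (∑ i ∈ s, f i) + ∑ i ∈ t, f i := by
  have h1 : (s ∆ t : Finset ι) = (s ∪ t) \ (s ∩ t) := by
    rw [symmDiff_eq_sup_sdiff_inf, Finset.sup_eq_union, Finset.inf_eq_inter]
  have h2 := Finset.sum_sdiff (f := f) (Finset.inter_subset_union (s := s) (t := t))
  have h3 := Finset.sum_union_inter (f := f) (s₁ := s) (s₂ := t)
  have h4 : (2 : R) = 0 := by exact_mod_cast CharP.cast_eq_zero R 2
  rw [h1]
  linear_combination h2 + h3 - (∑ i ∈ s ∩ t, f i) * h4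

variable (k : Type*) [Field k] [CharP k 2] (n : ℕ)

noncomputable def w (s : Finset (Fin n)) : MvPolynomial (Fin n) k := ∑ i ∈ s, X i

noncomputable def eta : Polynomial (MvPolynomial (Fin n) k) :=
  ∏ s ∈ (univ : Finset (Fin n)).powerset, (Polynomial.X - Polynomial.C (w k n s))

noncomputable def tau (v : MvPolynomial (Fin n) k) :
    Polynomial (MvPolynomial (Fin n) k) →ₐ[MvPolynomial (Fin n) k]
      Polynomial (MvPolynomial (Fin n) k) :=
  Polynomial.aeval (Polynomial.X - Polynomial.C v)

variable {k n}

lemma w_symmDiff (s t : Finset (Fin n)) : w k n (s ∆ t) = w k n s + w k n t :=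
  sum_symmDiff_char2 _ s t

lemma w_inj : Function.Injective (w k n) := by
  intro s t h
  have h0 : w k n (s ∆ t) = 0 := by
    rw [w_symmDiff, h, CharTwo.add_self_eq_zero]
  have hempty : s ∆ t = ∅ := by
    by_contra hne
    obtain ⟨i, hi⟩ := Finset.nonempty_iff_ne_empty.2 hne
    have hc : (w k n (s ∆ t)).coeff (Finsupp.single i 1) = 1 := by
      rw [w, MvPolynomial.coeff_sum]
      have : ∀ j ∈ s ∆ t, (X j : MvPolynomial (Fin n) k).coeff (Finsupp.single i 1)
          = if j = i then 1 else 0 := by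
        intro j _
        rw [MvPolynomial.coeff_X']
        congr 1
        simp [Finsupp.single_left_inj (one_ne_zero (α := ℕ)), eq_iff_iff, eq_comm]
      rw [Finset.sum_congr rfl this, Finset.sum_ite_eq' (s ∆ t) i (fun _ => (1 : k))]
      simp [hi]
    rw [h0] at hc
    simp at hc
  exact symmDiff_eq_bot.mp (by simpa using hempty)

lemma tau_apply (v : MvPolynomial (Fin n) k) (f) :
    tau k n v f = f.comp (Polynomial.X - Polynomial.C v) := rfl

lemma tau_sub_C (u v : MvPolynomial (Fin n) k) :
    tau k n v (Polynomial.X - Polynomial.C u) = Polynomial.X - Polynomial.C (u + v) := by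
  simp only [tau, map_sub, Polynomial.aeval_X, Polynomial.aeval_C, Polynomial.algebraMap_eq,
    map_add]
  ring

lemma tau_tau (u v : MvPolynomial (Fin n) k) (f) :
    tau k n u (tau k n v f) = tau k n (u + v) f := by
  rw [tau, tau, ← Polynomial.aeval_algHom_apply]
  congr 1
  rw [← tau]
  rw [tau_sub_C]
  congr 1
  rw [add_comm]

lemma tau_C (v p : MvPolynomial (Fin n) k) :
    tau k n v (Polynomial.C p) = Polynomial.C p := by
  simp [tau, Polynomial.aeval_C, Polynomial.algebraMap_eq]

lemma tau_zero (f) : tau k n 0 f = f := by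
  simp [tau]

lemma tau_natDegree (v : MvPolynomial (Fin n) k) (f) :
    (tau k n v f).natDegree = f.natDegree := by
  rw [tau_apply, Polynomial.natDegree_comp, Polynomial.natDegree_X_sub_C, mul_one]

lemma tau_eq_zero_iff (v : MvPolynomial (Fin n) k) (f) :
    tau k n v f = 0 ↔ f = 0 := by
  constructor
  · intro h
    have : tau k n v (tau k n v f) = f := by
      rw [tau_tau, CharTwo.add_self_eq_zero, tau_zero]
    rw [h, map_zero] at this
    exact this.symm
  · rintro rfl; exact map_zero _

lemma tau_degree (v : MvPolynomial (Fin n) k) (f) :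
    (tau k n v f).degree = f.degree := by
  by_cases hf : f = 0
  · simp [hf]
  · rw [Polynomial.degree_eq_natDegree hf,
      Polynomial.degree_eq_natDegree ((not_iff_not.2 (tau_eq_zero_iff v f)).2 hf),
      tau_natDegree]

lemma eta_monic : (eta k n).Monic :=
  Polynomial.monic_prod_of_monic _ _ fun s _ => Polynomial.monic_X_sub_C _

lemma eta_natDegree : (eta k n).natDegree = 2 ^ n := by
  rw [eta, Polynomial.natDegree_prod _ _ (fun s _ => Polynomial.X_sub_C_ne_zero _)]
  simp [Polynomial.natDegree_X_sub_C, Finset.card_powerset]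

lemma tau_eta (t : Finset (Fin n)) : tau k n (w k n t) (eta k n) = eta k n := by
  rw [eta, map_prod]
  have hfac : ∀ s ∈ (univ : Finset (Fin n)).powerset,
      tau k n (w k n t) (Polynomial.X - Polynomial.C (w k n s))
        = Polynomial.X - Polynomial.C (w k n (s ∆ t)) := by
    intro s _
    rw [tau_sub_C, w_symmDiff]
  rw [Finset.prod_congr rfl hfac]
  refine Finset.prod_nbij' (fun s => s ∆ t) (fun s => s ∆ t) ?_ ?_ ?_ ?_ ?_
  · intro a _; simp
  · intro a _; simp
  · intro a _; exact symmDiff_symmDiff_cancel_right t a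
  · intro a _; exact symmDiff_symmDiff_cancel_right t a
  · intro a _; rfl

lemma tau_w_invariant (f : Polynomial (MvPolynomial (Fin n) k))
    (hf : ∀ i : Fin n, tau k n (X i) f = f) (s : Finset (Fin n)) :
    tau k n (w k n s) f = f := by
  classical
  induction s using Finset.induction_on with
  | empty => simpa [w] using tau_zero f
  | @insert a s ha ih =>
      have hw : w k n (insert a s) = X a + w k n s := by
        rw [w, w, Finset.sum_insert ha]
      rw [hw, ← tau_tau, ih, hf]


lemma w_singleton (i : Fin n) : w k n {i} = X i := by
  rw [w, Finset.sum_singleton]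

lemma invariant_small (f : Polynomial (MvPolynomial (Fin n) k))
    (hdeg : f.natDegree < 2 ^ n)
    (hf : ∀ s : Finset (Fin n), tau k n (w k n s) f = f) :
    ∃ c, f = Polynomial.C c := by
  have heval : ∀ s : Finset (Fin n), f.eval (w k n s) = f.eval 0 := by
    intro s
    have h1 := congrArg (Polynomial.eval 0) (hf s)
    rw [tau_apply, Polynomial.eval_comp, Polynomial.eval_sub, Polynomial.eval_X,
      Polynomial.eval_C, zero_sub, CharTwo.neg_eq] at h1
    exact h1
  have hg0 : f - Polynomial.C (f.eval 0) = 0 := by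
    apply Polynomial.eq_zero_of_natDegree_lt_card_of_eval_eq_zero _ w_inj
    · intro s
      simp [heval s]
    · calc (f - Polynomial.C (f.eval 0)).natDegree = f.natDegree :=
            Polynomial.natDegree_sub_C
      _ < 2 ^ n := hdeg
      _ = Fintype.card (Finset (Fin n)) := by rw [Fintype.card_finset, Fintype.card_fin]
  exact ⟨f.eval 0, by rw [← sub_eq_zero]; exact hg0⟩

lemma C_mem_adjoin (p : MvPolynomial (Fin n) k) :
    (Polynomial.C p : Polynomial (MvPolynomial (Fin n) k)) ∈
      Algebra.adjoin k (insert (eta k n)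
        (Set.range fun i : Fin n =>
          (Polynomial.C (X i) : Polynomial (MvPolynomial (Fin n) k)))) := by
  have h1 : p ∈ (⊤ : Subalgebra k (MvPolynomial (Fin n) k)) := trivial
  rw [← MvPolynomial.adjoin_range_X] at h1
  set CA : MvPolynomial (Fin n) k →ₐ[k] Polynomial (MvPolynomial (Fin n) k) :=
    IsScalarTower.toAlgHom k _ _ with hCA
  have h2 : CA p ∈ (Algebra.adjoin k (Set.range (X : Fin n → _))).map CA :=
    Subalgebra.mem_map.2 ⟨p, h1, rfl⟩
  rw [AlgHom.map_adjoin] at h2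
  have h3 : CA '' Set.range (X : Fin n → _) ⊆
      insert (eta k n) (Set.range fun i : Fin n =>
        (Polynomial.C (X i) : Polynomial (MvPolynomial (Fin n) k))) := by
    rintro _ ⟨_, ⟨i, rfl⟩, rfl⟩
    refine Set.mem_insert_iff.2 (Or.inr ⟨i, ?_⟩)
    simp [hCA, Polynomial.algebraMap_eq]
  have h4 := Algebra.adjoin_mono h3 h2
  have h5 : CA p = Polynomial.C p := by simp [hCA, Polynomial.algebraMap_eq]
  rwa [h5] at h4

lemma invariant_mem (f : Polynomial (MvPolynomial (Fin n) k))
    (hf : ∀ i : Fin n, tau k n (X i) f = f) :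
    f ∈ Algebra.adjoin k (insert (eta k n)
      (Set.range fun i : Fin n =>
        (Polynomial.C (X i) : Polynomial (MvPolynomial (Fin n) k)))) := by
  have key : ∀ N : ℕ, ∀ f : Polynomial (MvPolynomial (Fin n) k), f.natDegree ≤ N →
      (∀ i : Fin n, tau k n (X i) f = f) →
      f ∈ Algebra.adjoin k (insert (eta k n)
        (Set.range fun i : Fin n =>
          (Polynomial.C (X i) : Polynomial (MvPolynomial (Fin n) k)))) := by
    intro N
    induction N with
    | zero =>
        intro f hdeg hfi
        rw [Polynomial.eq_C_of_natDegree_le_zero hdeg]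
        exact C_mem_adjoin _
    | succ N ih =>
        intro f hdeg hfi
        have hws : ∀ s, tau k n (w k n s) f = f := tau_w_invariant f hfi
        by_cases hsmall : f.natDegree < 2 ^ n
        · obtain ⟨c, rfl⟩ := invariant_small f hsmall hws
          exact C_mem_adjoin _
        · have hinvq : ∀ s : Finset (Fin n),
              tau k n (w k n s) (f /ₘ eta k n) = f /ₘ eta k n ∧
              tau k n (w k n s) (f %ₘ eta k n) = f %ₘ eta k n := by
            intro s
            have h1 : tau k n (w k n s) (f %ₘ eta k n) +
                eta k n * tau k n (w k n s) (f /ₘ eta k n) = f := by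
              have h2 := congrArg (tau k n (w k n s))
                (Polynomial.modByMonic_add_div f (eta k n))
              rwa [map_add, map_mul, tau_eta, hws s] at h2
            have h3 : (tau k n (w k n s) (f %ₘ eta k n)).degree < (eta k n).degree := by
              rw [tau_degree]
              exact Polynomial.degree_modByMonic_lt f eta_monic
            have huniq := Polynomial.div_modByMonic_unique _ _
              (eta_monic (k := k) (n := n)) ⟨h1, h3⟩
            exact ⟨huniq.1.symm, huniq.2.symm⟩
          have hremdeg : (f %ₘ eta k n).natDegree < 2 ^ n := by
            by_cases h0 : f %ₘ eta k n = 0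
            · rw [h0]
              simpa using Nat.one_le_two_pow (n := n)
            · have hd := Polynomial.degree_modByMonic_lt f (eta_monic (k := k) (n := n))
              rw [Polynomial.degree_eq_natDegree h0,
                Polynomial.degree_eq_natDegree (eta_monic (k := k) (n := n)).ne_zero] at hd
              rw [← eta_natDegree (k := k) (n := n)]
              exact_mod_cast hd
          obtain ⟨c, hc⟩ := invariant_small _ hremdeg (fun s => (hinvq s).2)
          have hqmem := ih (f /ₘ eta k n) ?_ ?_
          · rw [← Polynomial.modByMonic_add_div f (eta k n), hc]
            exact Subalgebra.add_mem _ (C_mem_adjoin c)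
              (Subalgebra.mul_mem _ (Algebra.subset_adjoin (Set.mem_insert _ _)) hqmem)
          · rw [Polynomial.natDegree_divByMonic f (eta_monic (k := k) (n := n)),
              eta_natDegree]
            have h2p := Nat.one_le_two_pow (n := n)
            omega
          · intro i
            have := (hinvq {i}).1
            rwa [w_singleton] at this
  exact key f.natDegree f le_rfl hf


section Bridge

variable (k : Type*) [Field k] [CharP k 2] (n : ℕ)

/-- the coefficient by which `ε_i` translates, viewed in `MvPolynomial (Fin n) k` -/
noncomputable def cc : Fin (n + 1) → MvPolynomial (Fin n) k := fun i =>
  if h : (i : ℕ) < n then X (⟨i, h⟩ : Fin n) else w k n Finset.univ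

/-- `θ : k[x₁,…,x_{n+1},A] → k[x₁,…,x_n][A]` -/
noncomputable def theta : MvPolynomial (Fin (n + 1) ⊕ Unit) k →ₐ[k]
    Polynomial (MvPolynomial (Fin n) k) :=
  MvPolynomial.aeval (fun v => match v with
    | Sum.inl m => Polynomial.C (cc k n m)
    | Sum.inr _ => Polynomial.X)

/-- `ψ : k[x₁,…,x_n][A] → S` -/
noncomputable def psi (I : Ideal (MvPolynomial (Fin (n + 1) ⊕ Unit) k)) :
    Polynomial (MvPolynomial (Fin n) k) →ₐ[k] (MvPolynomial (Fin (n + 1) ⊕ Unit) k ⧸ I) :=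
  Polynomial.eval₂AlgHom
    ((Ideal.Quotient.mkₐ k I).comp
      (MvPolynomial.aeval fun i : Fin n =>
        X (Sum.inl (Fin.castLE (Nat.sub_le (n + 1) 1) i))))
    (Ideal.Quotient.mk I (X (Sum.inr ()))) (fun _ => Commute.all _ _)

variable {k n}

lemma theta_X_inl (m : Fin (n + 1)) :
    theta k n (X (Sum.inl m)) = Polynomial.C (cc k n m) := by
  simp [theta]

lemma theta_X_inr : theta k n (X (Sum.inr () : Fin (n + 1) ⊕ Unit)) = Polynomial.X := by
  simp [theta]

lemma cc_castLE (i : Fin n) :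
    cc k n (Fin.castLE (Nat.sub_le (n + 1) 1) i) = X i := by
  simp [cc, i.isLt]

lemma cc_castSucc (i : Fin n) : cc k n i.castSucc = X i := by
  simp [cc, i.isLt]

lemma cc_last : cc k n (Fin.last n) = w k n Finset.univ := by
  simp [cc]

lemma sum_cc : ∑ i : Fin (n + 1), cc k n i = 0 := by
  rw [Fin.sum_univ_castSucc]
  rw [Finset.sum_congr rfl (fun i _ => cc_castSucc i), cc_last]
  have : (∑ i : Fin n, (X i : MvPolynomial (Fin n) k)) = w k n Finset.univ := by rw [w]
  rw [this, CharTwo.add_self_eq_zero]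

lemma theta_gen :
    theta k n (∑ i : Fin (n + 1), X (Sum.inl i)) = 0 := by
  rw [map_sum]
  rw [Finset.sum_congr rfl (fun i _ => theta_X_inl i), ← map_sum, sum_cc, map_zero]

lemma theta_ker {I : Ideal (MvPolynomial (Fin (n + 1) ⊕ Unit) k)}
    (hI : I = Ideal.span
      ({∑ i : Fin (n + 1), X (Sum.inl i)} : Set (MvPolynomial (Fin (n + 1) ⊕ Unit) k))) :
    ∀ a ∈ I, theta k n a = 0 := by
  intro a ha
  rw [hI] at ha
  obtain ⟨c, rfl⟩ := Ideal.mem_span_singleton'.1 ha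
  rw [map_mul, theta_gen, mul_zero]

lemma psi_C {I : Ideal (MvPolynomial (Fin (n + 1) ⊕ Unit) k)}
    (p : MvPolynomial (Fin n) k) :
    psi k n I (Polynomial.C p) = Ideal.Quotient.mk I
      (MvPolynomial.aeval (fun i : Fin n =>
        (X (Sum.inl (Fin.castLE (Nat.sub_le (n + 1) 1) i)) :
          MvPolynomial (Fin (n + 1) ⊕ Unit) k)) p) := by
  simp [psi]

lemma psi_X {I : Ideal (MvPolynomial (Fin (n + 1) ⊕ Unit) k)} :
    psi k n I Polynomial.X = Ideal.Quotient.mk I (X (Sum.inr ())) := by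
  simp [psi]

lemma psi_theta {I : Ideal (MvPolynomial (Fin (n + 1) ⊕ Unit) k)}
    (hIgen : (∑ i : Fin (n + 1), X (Sum.inl i)) ∈ I)
    (f : MvPolynomial (Fin (n + 1) ⊕ Unit) k) :
    psi k n I (theta k n f) = Ideal.Quotient.mk I f := by
  have h : (psi k n I).comp (theta k n) = Ideal.Quotient.mkₐ k I := by
    apply MvPolynomial.algHom_ext
    intro v
    cases v with
    | inr u =>
        cases u
        rw [AlgHom.comp_apply, theta_X_inr, psi_X, Ideal.Quotient.mkₐ_eq_mk]
    | inl m =>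
        rw [AlgHom.comp_apply, theta_X_inl, psi_C, Ideal.Quotient.mkₐ_eq_mk]
        by_cases h : (m : ℕ) < n
        · have : cc k n m = X (⟨m, h⟩ : Fin n) := by simp [cc, h]
          rw [this, MvPolynomial.aeval_X]
          congr 2
        · have hm : m = Fin.last n := Fin.ext (by simp only [Fin.val_last]; have := m.isLt; omega)
          have : cc k n m = w k n Finset.univ := by rw [hm, cc_last]
          rw [this, w, map_sum]
          simp only [MvPolynomial.aeval_X]
          rw [Ideal.Quotient.eq]
          have heq : (∑ i : Fin n,
              (X (Sum.inl (Fin.castLE (Nat.sub_le (n + 1) 1) i)) :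
                MvPolynomial (Fin (n + 1) ⊕ Unit) k)) - X (Sum.inl m) =
              ∑ i : Fin (n + 1), X (Sum.inl i) := by
            rw [Fin.sum_univ_castSucc
              (f := fun i : Fin (n + 1) =>
                (X (Sum.inl i) : MvPolynomial (Fin (n + 1) ⊕ Unit) k))]
            rw [CharTwo.sub_eq_add, hm]
            congr 1
          rw [heq]
          exact hIgen
  exact DFunLike.congr_fun h f

lemma theta_aeval {i : Fin (n + 1)}
    (σ : Fin (n + 1) ⊕ Unit → MvPolynomial (Fin (n + 1) ⊕ Unit) k)
    (hσl : ∀ m, σ (Sum.inl m) = X (Sum.inl m))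
    (hσr : σ (Sum.inr ()) = X (Sum.inr ()) - X (Sum.inl i))
    (f : MvPolynomial (Fin (n + 1) ⊕ Unit) k) :
    theta k n (MvPolynomial.aeval σ f) = tau k n (cc k n i) (theta k n f) := by
  have h : (theta k n).comp (MvPolynomial.aeval σ)
      = ((tau k n (cc k n i)).restrictScalars k).comp (theta k n) := by
    apply MvPolynomial.algHom_ext
    intro v
    cases v with
    | inl m =>
        simp only [AlgHom.comp_apply, MvPolynomial.aeval_X,
          AlgHom.restrictScalars_apply, hσl]
        rw [theta_X_inl, tau_C]
    | inr u =>
        cases u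
        simp only [AlgHom.comp_apply, MvPolynomial.aeval_X,
          AlgHom.restrictScalars_apply, hσr]
        rw [map_sub, theta_X_inr, theta_X_inl]
        rw [tau, Polynomial.aeval_X]
  exact DFunLike.congr_fun h f

lemma tau_cc_eta (i : Fin (n + 1)) : tau k n (cc k n i) (eta k n) = eta k n := by
  by_cases h : (i : ℕ) < n
  · have : cc k n i = w k n {(⟨i, h⟩ : Fin n)} := by simp [cc, h, w_singleton]
    rw [this, tau_eta]
  · have : cc k n i = w k n Finset.univ := by simp [cc, h]
    rw [this, tau_eta]


lemma theta_eta (η : MvPolynomial (Fin (n + 1) ⊕ Unit) k)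
    (hη : η = ∏ s ∈ (Finset.univ : Finset (Fin n)).powerset,
        (X (Sum.inr ()) - ∑ i ∈ s, X (Sum.inl (Fin.castLE (Nat.sub_le (n + 1) 1) i)))) :
    theta k n η = eta k n := by
  rw [hη, map_prod, eta]
  refine Finset.prod_congr rfl (fun s _ => ?_)
  rw [map_sub, theta_X_inr, map_sum]
  congr 1
  rw [w, map_sum]
  refine Finset.sum_congr rfl (fun i _ => ?_)
  rw [theta_X_inl, cc_castLE]

end Bridge

end Stmt14





set_option maxHeartbeats 1000000 in
set_option synthInstance.maxHeartbeats 200000 in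
theorem invariants_of_Er_action
    (k : Type*) [Field k] [CharP k 2] (r : ℕ) (hr : 1 ≤ r)
    (I : Ideal (MvPolynomial (Fin r ⊕ Unit) k))
    (hI : I = Ideal.span ({∑ i : Fin r, X (Sum.inl i)} : Set (MvPolynomial (Fin r ⊕ Unit) k)))
    (φ : Fin r → ((MvPolynomial (Fin r ⊕ Unit) k ⧸ I) →ₐ[k] (MvPolynomial (Fin r ⊕ Unit) k ⧸ I)))
    (hφ : ∀ (i : Fin r) (f : MvPolynomial (Fin r ⊕ Unit) k),
      φ i (Ideal.Quotient.mk I f) =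
        Ideal.Quotient.mk I
          (MvPolynomial.aeval (R := k)
            (fun v : Fin r ⊕ Unit =>
              match v with
              | Sum.inl m => X (Sum.inl m)
              | Sum.inr _ => X (Sum.inr ()) - X (Sum.inl i))
            f))
    (η : MvPolynomial (Fin r ⊕ Unit) k)
    (hη : η = ∏ s ∈ (Finset.univ : Finset (Fin (r - 1))).powerset,
        (X (Sum.inr ()) - ∑ i ∈ s, X (Sum.inl (Fin.castLE (Nat.sub_le r 1) i)))) :
    (∀ f : MvPolynomial (Fin r ⊕ Unit) k,
        Ideal.Quotient.mk I
            (MvPolynomial.aeval (R := k)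
              (fun v : Fin r ⊕ Unit =>
                match v with
                | Sum.inl m => X (Sum.inl m)
                | Sum.inr _ => X (Sum.inr ()) - ∑ i : Fin r, X (Sum.inl i))
              f) =
          Ideal.Quotient.mk I f) ∧
      ∀ y : MvPolynomial (Fin r ⊕ Unit) k ⧸ I,
        (∀ i : Fin r, φ i y = y) ↔
          y ∈ Algebra.adjoin k
            (insert (Ideal.Quotient.mk I η)
              (Set.range fun m : Fin r => Ideal.Quotient.mk I (X (Sum.inl m)))) := by
  classical
  obtain ⟨n, rfl⟩ : ∃ n, r = n + 1 := ⟨r - 1, (Nat.succ_pred_eq_of_pos hr).symm⟩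
  have hIgen : (∑ i : Fin (n + 1), X (Sum.inl i) : MvPolynomial (Fin (n + 1) ⊕ Unit) k) ∈ I := by
    rw [hI]; exact Ideal.subset_span rfl
  have hη' : η = ∏ s ∈ (Finset.univ : Finset (Fin n)).powerset,
      (X (Sum.inr ()) - ∑ i ∈ s,
        X (Sum.inl (Fin.castLE (Nat.sub_le (n + 1) 1) i))) := hη
  have hthetaEq : ∀ {a b : MvPolynomial (Fin (n + 1) ⊕ Unit) k},
      Ideal.Quotient.mk I a = Ideal.Quotient.mk I b →
      Stmt14.theta k n a = Stmt14.theta k n b := by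
    intro a b hab
    have hmem : a - b ∈ I := Ideal.Quotient.eq.1 hab
    have h0 := Stmt14.theta_ker hI _ hmem
    rw [map_sub] at h0
    exact sub_eq_zero.1 h0
  constructor
  · -- Part 1 : ε₁⋯ε_r acts as the identity
    intro f
    induction f using MvPolynomial.induction_on with
    | C a => simp
    | add p q hp hq =>
        rw [map_add, map_add, hp, hq]
        exact (map_add _ p q).symm
    | mul_X p v hp =>
        rw [map_mul, map_mul, hp, map_mul]
        congr 1
        cases v with
        | inl m => simp
        | inr u =>
            cases u
            rw [MvPolynomial.aeval_X]
            show Ideal.Quotient.mk I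
                (X (Sum.inr ()) - ∑ i : Fin (n + 1), X (Sum.inl i)) =
              Ideal.Quotient.mk I (X (Sum.inr ()))
            rw [map_sub, Ideal.Quotient.eq_zero_iff_mem.2 hIgen, sub_zero]
  · -- Part 2 : invariants
    intro y
    constructor
    · -- invariant ⇒ in the adjoin
      intro hy
      obtain ⟨f, rfl⟩ := Ideal.Quotient.mk_surjective y
      have hinv : ∀ j : Fin n,
          Stmt14.tau k n (X j) (Stmt14.theta k n f) = Stmt14.theta k n f := by
        intro j
        have h1 := hy (Fin.castLE (Nat.sub_le (n + 1) 1) j)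
        rw [hφ] at h1
        have h2 := hthetaEq h1
        rw [Stmt14.theta_aeval (i := Fin.castLE (Nat.sub_le (n + 1) 1) j)] at h2
        rotate_left
        · exact fun m => rfl
        · rfl
        rwa [Stmt14.cc_castLE] at h2
      have hmem := Stmt14.invariant_mem (Stmt14.theta k n f) hinv
      have hy_eq : Ideal.Quotient.mk I f = Stmt14.psi k n I (Stmt14.theta k n f) :=
        (Stmt14.psi_theta hIgen f).symm
      rw [hy_eq]
      have h2 : Stmt14.psi k n I (Stmt14.theta k n f) ∈
          (Algebra.adjoin k (insert (Stmt14.eta k n)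
            (Set.range fun i : Fin n =>
              (Polynomial.C (X i) : Polynomial (MvPolynomial (Fin n) k))))).map
                (Stmt14.psi k n I) :=
        Subalgebra.mem_map.2 ⟨_, hmem, rfl⟩
      rw [AlgHom.map_adjoin] at h2
      refine Algebra.adjoin_mono ?_ h2
      rw [Set.image_insert_eq]
      have hψeta : Stmt14.psi k n I (Stmt14.eta k n) = Ideal.Quotient.mk I η := by
        rw [← Stmt14.theta_eta η hη', Stmt14.psi_theta hIgen]
      intro z hz
      rcases Set.mem_insert_iff.1 hz with rfl | hz
      · rw [hψeta]
        exact Set.mem_insert _ _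
      · obtain ⟨_, ⟨i, rfl⟩, rfl⟩ := hz
        refine Set.mem_insert_iff.2 (Or.inr ⟨Fin.castLE (Nat.sub_le (n + 1) 1) i, ?_⟩)
        rw [Stmt14.psi_C, MvPolynomial.aeval_X]
    · -- in the adjoin ⇒ invariant
      intro hy i
      have hgen_le : Algebra.adjoin k
          (insert (Ideal.Quotient.mk I η)
            (Set.range fun m : Fin (n + 1) => Ideal.Quotient.mk I (X (Sum.inl m)))) ≤
          AlgHom.equalizer (φ i) (AlgHom.id k _) := by
        rw [Algebra.adjoin_le_iff]
        intro z hz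
        rw [SetLike.mem_coe, AlgHom.mem_equalizer, AlgHom.id_apply]
        rcases Set.mem_insert_iff.1 hz with rfl | ⟨m, rfl⟩
        · -- η is invariant
          rw [hφ, ← Stmt14.psi_theta hIgen]
          rw [Stmt14.theta_aeval (i := i)]
          rotate_left
          · exact fun m => rfl
          · rfl
          rw [Stmt14.theta_eta η hη', Stmt14.tau_cc_eta, ← Stmt14.theta_eta η hη',
            Stmt14.psi_theta hIgen]
        · rw [hφ]
          simp
      have hmem := hgen_le hy
      rw [AlgHom.mem_equalizer] at hmem
      simpa using hmem
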